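/- Let W_n be the wheel graph on n + 1 vertices (a hub joined to each of n rim vertices arranged in a cycle). Then the critical group satisfies Crit(W_n) ≅ ℤ/(F_{n−1} + F_{n+1}) × ℤ/(F_{n−1} + F_{n+1}) if n is odd, and Crit(W_n) ≅ ℤ/F_n × ℤ/(5F_n) if n is even, where F_k are the Fibonacci numbers. -/

import Mathlib

open Finsupp

/-- A graph with boundary (`∂`-graph) together with a generalized Laplacian datum over `R`:
oriented edges with a fixed-point-free reversal involution, local finiteness,
a set of boundary vertices, symmetric edge weights `w` and diagonal perturbation `d`. -/
structure DNetwork (R : Type) [CommRing R] where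
  V : Type
  E : Type
  src : E → V
  rev : E → E
  rev_rev : ∀ e, rev (rev e) = e
  rev_ne : ∀ e, rev e ≠ e
  finE : ∀ x : V, Fintype {e : E // src e = x}
  boundary : Set V
  w : E → R
  w_rev : ∀ e, w (rev e) = w e
  d : V → R

namespace DNetwork

variable {R : Type} [CommRing R] (N : DNetwork R)

/-- The endpoint of an oriented edge. -/
def tgt (e : N.E) : N.V := N.src (N.rev e)

/-- The generalized Laplacian evaluated at the vertex `x`, as a linear functional on
`M`-valued functions: `Lu(x) = d(x) u(x) + ∑_{e : e₊ = x} w(e) (u(x) - u(e₋))`. -/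
noncomputable def lapAt {M : Type} [AddCommGroup M] [Module R M] (x : N.V) :
    (N.V → M) →ₗ[R] M :=
  letI := N.finE x
  N.d x • (LinearMap.proj x : (N.V → M) →ₗ[R] M) +
    ∑ e : {e : N.E // N.src e = x},
      N.w e.1 • ((LinearMap.proj x : (N.V → M) →ₗ[R] M) - LinearMap.proj (N.tgt e.1))

/-- The generalized Laplacian applied to the basis chain at the vertex `x`. -/
noncomputable def lapSingle (x : N.V) : N.V →₀ R :=
  letI := N.finE x
  N.d x • Finsupp.single x 1 +
    ∑ e : {e : N.E // N.src e = x},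
      N.w e.1 • (Finsupp.single x 1 - Finsupp.single (N.tgt e.1) 1)

/-- The generalized Laplacian as a linear endomorphism of the module `RV` of `0`-chains. -/
noncomputable def chainLap : (N.V →₀ R) →ₗ[R] (N.V →₀ R) :=
  Finsupp.lsum R fun x => LinearMap.toSpanSingleton R _ (N.lapSingle x)

/-- The set of interior vertices. -/
def interior : Set N.V := N.boundaryᶜ

/-- The submodule `L(RV°)` of `RV`. -/
noncomputable def lapImage : Submodule R (N.V →₀ R) :=
  Submodule.map N.chainLap (Finsupp.supported R R N.interior)

/-- The fundamental module `Υ(G,L) = RV / L(RV°)`. -/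
abbrev Upsilon := (N.V →₀ R) ⧸ N.lapImage

/-- The submodule of `M`-valued harmonic functions `U(G,L,M)`. -/
noncomputable def harmonic (M : Type) [AddCommGroup M] [Module R M] :
    Submodule R (N.V → M) :=
  ⨅ x ∈ N.interior, LinearMap.ker (N.lapAt (M := M) x)

/-- The module `U₀(G,L,M)` of finitely supported `M`-valued functions `u` with
`u = 0` on the boundary and `Lu ≡ 0` everywhere. -/
noncomputable def U0 (M : Type) [AddCommGroup M] [Module R M] :
    Submodule R (N.V →₀ M) :=
  (⨅ x ∈ N.boundary, LinearMap.ker (Finsupp.lapply (M := M) (R := R) x)) ⊓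
    (⨅ x : N.V, LinearMap.ker ((N.lapAt (M := M) x).comp Finsupp.lcoeFun))

/-- Adjacency via an oriented edge. -/
def Adj (x y : N.V) : Prop := ∃ e : N.E, N.src e = x ∧ N.tgt e = y

/-- Connectivity of the underlying graph. -/
def Connected : Prop := ∀ x y : N.V, Relation.ReflTransGen N.Adj x y

end DNetwork

/-- The augmentation map `ε : ℤV → ℤ` summing coordinates. -/
noncomputable def epsMap (N : DNetwork ℤ) : (N.V →₀ ℤ) →ₗ[ℤ] ℤ :=
  Finsupp.lsum ℤ fun _ => LinearMap.id

/-- The wheel graph `W_n` on `n + 1` vertices (a hub `none` joined to each of the `n` rim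
vertices `some k`, the rim vertices arranged in a cycle `some k ∼ some (k+1)`), as a graph
without boundary with the standard Laplacian (all weights `1`, `d = 0`) over `ℤ`. -/
noncomputable def wheelNet (n : ℕ) [NeZero n] : DNetwork ℤ where
  V := Option (Fin n)
  E := (Fin n × Bool) ⊕ (Fin n × Bool)
  src := fun e => match e with
    | .inl (_, true) => none            -- spoke, oriented hub → rim
    | .inl (k, false) => some k         -- spoke, oriented rim → hub
    | .inr (k, true) => some k          -- rim edge, oriented k → k+1
    | .inr (k, false) => some (k + 1)   -- rim edge, oriented k+1 → k
  rev := fun e => match e with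
    | .inl (k, b) => .inl (k, !b)
    | .inr (k, b) => .inr (k, !b)
  rev_rev := by rintro (⟨k, b⟩ | ⟨k, b⟩) <;> simp
  rev_ne := by rintro (⟨k, b⟩ | ⟨k, b⟩) <;> simp
  finE := fun _ => Fintype.ofFinite _
  boundary := ∅
  w := fun _ => 1
  w_rev := fun _ => rfl
  d := fun _ => 0

/-- The critical group of the wheel graph: `Crit(W_n) = ker ε / im L_std`, realized as the
image of `ker ε` in `Υ = ℤV / L(ℤV)`. -/
noncomputable def wheelCrit (n : ℕ) [NeZero n] : Submodule ℤ (wheelNet n).Upsilon :=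
  Submodule.map (wheelNet n).lapImage.mkQ (LinearMap.ker (epsMap (wheelNet n)))


noncomputable section CritAux

def fz (k : ℕ) : ℤ := Nat.fib k
lemma fz_add_two (k : ℕ) : fz (k + 2) = fz (k + 1) + fz k := by
  unfold fz; push_cast [Nat.fib_add_two]; ring
lemma fz_add (a b : ℕ) : fz (a + b + 1) = fz a * fz b + fz (a + 1) * fz (b + 1) := by
  unfold fz; push_cast [Nat.fib_add]; ring
lemma fz_cassini (k : ℕ) : fz (k + 1) ^ 2 - fz (k + 2) * fz k = (-1) ^ k := by
  induction k with
  | zero => simp [fz]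
  | succ k ih =>
    have h1 : fz (k + 2) = fz (k + 1) + fz k := fz_add_two k
    have h2 : fz (k + 3) = fz (k + 2) + fz (k + 1) := fz_add_two (k + 1)
    calc fz (k + 1 + 1) ^ 2 - fz (k + 1 + 2) * fz (k + 1)
        = fz (k + 2) ^ 2 - fz (k + 3) * fz (k + 1) := rfl
      _ = (-1) ^ (k + 1) := by
          rw [h2]; linear_combination fz (k + 2) * h1 - ih

def luc (k : ℕ) : ℤ := 2 * fz (k + 1) - fz k

section Shifts
variable (m : ℕ)
lemma ex2 : fz (m + 2) = fz (m + 1) + fz m := fz_add_two m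
lemma ex3 : fz (m + 3) = 2 * fz (m + 1) + fz m := by
  have h : fz (m + 3) = fz (m + 2) + fz (m + 1) := fz_add_two (m + 1)
  linear_combination h + ex2 m
lemma ex4 : fz (m + 4) = 3 * fz (m + 1) + 2 * fz m := by
  have h : fz (m + 4) = fz (m + 3) + fz (m + 2) := fz_add_two (m + 2)
  linear_combination h + ex2 m + ex3 m
lemma ex5 : fz (m + 5) = 5 * fz (m + 1) + 3 * fz m := by
  have h : fz (m + 5) = fz (m + 4) + fz (m + 3) := fz_add_two (m + 3)
  linear_combination h + ex3 m + ex4 m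
lemma lucx0 : luc m = 2 * fz (m + 1) - fz m := rfl
lemma lucx1 : luc (m + 1) = 2 * fz m + fz (m + 1) := by
  have h : luc (m + 1) = 2 * fz (m + 2) - fz (m + 1) := rfl
  linear_combination h + 2 * ex2 m
lemma lucx2 : luc (m + 2) = fz m + 3 * fz (m + 1) := by
  have h : luc (m + 2) = 2 * fz (m + 3) - fz (m + 2) := rfl
  linear_combination h + 2 * ex3 m - ex2 m
lemma lucx4 : luc (m + 4) = 4 * fz m + 7 * fz (m + 1) := by
  have h : luc (m + 4) = 2 * fz (m + 5) - fz (m + 4) := rfl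
  linear_combination h + 2 * ex5 m - ex4 m
lemma dx2 : fz (2 * m + 2) = 2 * fz m * fz (m + 1) + fz (m + 1) ^ 2 := by
  have h : fz (2 * m + 2) = fz m * fz (m + 1) + fz (m + 1) * fz (m + 2) := by
    rw [(by ring : 2 * m + 2 = m + (m + 1) + 1)]
    exact fz_add m (m + 1)
  linear_combination h + fz (m + 1) * ex2 m
lemma dx4 : fz (2 * m + 4) = fz m ^ 2 + 4 * fz m * fz (m + 1) + 3 * fz (m + 1) ^ 2 := by
  have h : fz (2 * m + 4) = fz (m + 1) * fz (m + 2) + fz (m + 2) * fz (m + 3) := by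
    rw [(by ring : 2 * m + 4 = (m + 1) + (m + 2) + 1)]
    exact fz_add (m + 1) (m + 2)
  linear_combination h + fz (m + 2) * ex3 m + (fz m + 3 * fz (m + 1)) * ex2 m
lemma dx6 : fz (2 * m + 6) = 3 * fz m ^ 2 + 10 * fz m * fz (m + 1) + 8 * fz (m + 1) ^ 2 := by
  have h : fz (2 * m + 6) = fz (m + 2) * fz (m + 3) + fz (m + 3) * fz (m + 4) := by
    rw [(by ring : 2 * m + 6 = (m + 2) + (m + 3) + 1)]
    exact fz_add (m + 2) (m + 3)
  linear_combination h + (fz (m + 3)) * ex2 m + (fz (m+1) + fz m + fz (m + 4)) * ex3 m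
    + (2 * fz (m + 1) + fz m) * ex4 m
end Shifts

lemma cassini_odd {m : ℕ} (hm : Odd m) :
    fz (m + 1) ^ 2 - fz (m + 2) * fz m = -1 := by
  rw [fz_cassini, hm.neg_one_pow]
lemma cassini_even {m : ℕ} (hm : Even m) :
    fz (m + 1) ^ 2 - fz (m + 2) * fz m = 1 := by
  rw [fz_cassini, hm.neg_one_pow]
lemma hcx_odd {m : ℕ} (hm : Odd m) :
    fz (m + 1) ^ 2 - fz m * fz (m + 1) - fz m ^ 2 = -1 := by
  linear_combination cassini_odd hm + fz m * ex2 m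
lemma hcx_even {m : ℕ} (hm : Even m) :
    fz (m + 1) ^ 2 - fz m * fz (m + 1) - fz m ^ 2 = 1 := by
  linear_combination cassini_even hm + fz m * ex2 m

lemma I1o {m : ℕ} (hm : Odd m) : fz (2 * m + 2) + 1 = luc (m + 2) * fz m := by
  linear_combination dx2 m - fz m * lucx2 m + hcx_odd hm
lemma I2 (m : ℕ) : fz (2 * m + 4) = luc (m + 2) * fz (m + 2) := by
  linear_combination dx4 m - fz (m + 2) * lucx2 m - (fz m + 3 * fz (m + 1)) * ex2 m
lemma I3o {m : ℕ} (hm : Odd m) : fz (2 * m + 6) - 1 = luc (m + 2) * fz (m + 4) := by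
  linear_combination dx6 m - luc (m + 2) * ex4 m - (2 * fz m + 3 * fz (m + 1)) * lucx2 m
    - hcx_odd hm
lemma I4o {m : ℕ} (hm : Odd m) : fz (m + 2) ^ 2 - fz m * fz (m + 4) = -1 := by
  linear_combination (fz (m + 2) + fz (m + 1) + fz m) * ex2 m - fz m * ex4 m + hcx_odd hm
lemma I1e {m : ℕ} (hm : Even m) : fz (2 * m + 2) + 1 = fz (m + 2) * luc m := by
  linear_combination dx2 m - luc m * ex2 m - (fz m + fz (m + 1)) * lucx0 m - hcx_even hm
lemma I3e {m : ℕ} (hm : Even m) : fz (2 * m + 6) - 1 = fz (m + 2) * luc (m + 4) := by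
  linear_combination dx6 m - luc (m + 4) * ex2 m - (fz m + fz (m + 1)) * lucx4 m + hcx_even hm
lemma I5e {m : ℕ} (hm : Even m) :
    luc (m + 1) ^ 2 - luc (m + 1) * luc m - luc m ^ 2 = -5 := by
  linear_combination (luc (m + 1) + 2 * fz m + fz (m + 1) - luc m) * lucx1 m
    + (-(2 * fz m + fz (m + 1)) - (luc m + 2 * fz (m + 1) - fz m)) * lucx0 m - 5 * hcx_even hm
lemma I6e {m : ℕ} (hm : Even m) : (5 : ℤ) ∣ 2 * luc (m + 1) - luc m := by
  have h5 : Prime (5 : ℤ) := by norm_num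
  have hsq : (2 * luc (m + 1) - luc m) ^ 2 = 5 * (luc m ^ 2 - 4) := by
    linear_combination 4 * I5e hm
  exact h5.dvd_of_dvd_pow ⟨_, hsq⟩

end CritAux


namespace WheelAux
open DNetwork

lemma sum_fiber {α M : Type*} [AddCommMonoid M] [Fintype α] {p : α → Prop}
    [DecidablePred p] (F : Fintype (Subtype p)) (f : α → M) :
    (@Finset.univ _ F).sum (fun e => f e.1) = ∑ e : α, if p e then f e else 0 := by
  rw [← Finset.sum_filter]
  exact (Finset.sum_subtype _ (by intro x; simp) f).symm

variable (n : ℕ) [NeZero n]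

instance : Fintype (wheelNet n).E :=
  inferInstanceAs (Fintype ((Fin n × Bool) ⊕ (Fin n × Bool)))
instance : DecidableEq (wheelNet n).V := inferInstanceAs (DecidableEq (Option (Fin n)))

@[simp] lemma src_inl_t (j : Fin n) : (wheelNet n).src (Sum.inl (j, true)) = none := rfl
@[simp] lemma src_inl_f (j : Fin n) : (wheelNet n).src (Sum.inl (j, false)) = Option.some j := rfl
@[simp] lemma src_inr_t (j : Fin n) : (wheelNet n).src (Sum.inr (j, true)) = Option.some j := rfl
@[simp] lemma src_inr_f (j : Fin n) :
    (wheelNet n).src (Sum.inr (j, false)) = Option.some (j + 1) := rfl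
@[simp] lemma tgt_inl_t (j : Fin n) : (wheelNet n).tgt (Sum.inl (j, true)) = Option.some j := rfl
@[simp] lemma tgt_inl_f (j : Fin n) : (wheelNet n).tgt (Sum.inl (j, false)) = none := rfl
@[simp] lemma tgt_inr_t (j : Fin n) :
    (wheelNet n).tgt (Sum.inr (j, true)) = Option.some (j + 1) := rfl
@[simp] lemma tgt_inr_f (j : Fin n) : (wheelNet n).tgt (Sum.inr (j, false)) = Option.some j := rfl
@[simp] lemma w_eq (e) : (wheelNet n).w e = 1 := rfl
@[simp] lemma d_eq (x) : (wheelNet n).d x = 0 := rfl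

lemma lapSingle_none :
    (wheelNet n).lapSingle none =
      ∑ j : Fin n,
        (Finsupp.single (none : Option (Fin n)) (1 : ℤ) - Finsupp.single (Option.some j) 1) := by
  unfold DNetwork.lapSingle
  erw [d_eq, zero_smul, zero_add]
  classical
  refine Eq.trans (sum_fiber ((wheelNet n).finE none)
    (fun e => (wheelNet n).w e •
      (Finsupp.single (none : Option (Fin n)) (1 : ℤ) -
        (Finsupp.single ((wheelNet n).tgt e) 1 : Option (Fin n) →₀ ℤ)))) ?_
  erw [Fintype.sum_sum_type]
  simp [Fintype.sum_prod_type, Fintype.sum_bool]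
  refine Finset.sum_congr rfl fun x _ => ?_
  erw [if_pos rfl, w_eq, one_smul]
  rfl

@[simp] lemma someinjV (x y : Fin n) :
    @Eq ((wheelNet n).V) (Option.some x) (Option.some y) ↔ x = y :=
  ⟨fun h => Option.some.inj h, fun h => by rw [h]⟩

@[simp] lemma noneneV (x : Fin n) :
    ¬ @Eq ((wheelNet n).V) none (Option.some x) :=
  fun h => by cases h

lemma lapSingle_some (k : Fin n) :
    (wheelNet n).lapSingle (Option.some k) =
      (Finsupp.single (Option.some k) (1 : ℤ) - Finsupp.single (none : Option (Fin n)) 1)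
      + (Finsupp.single (Option.some k) 1 - Finsupp.single (Option.some (k + 1)) 1)
      + (Finsupp.single (Option.some k) 1 - Finsupp.single (Option.some (k - 1)) 1) := by
  unfold DNetwork.lapSingle
  erw [d_eq, zero_smul, zero_add]
  classical
  refine Eq.trans (sum_fiber ((wheelNet n).finE (Option.some k))
    (fun e => (wheelNet n).w e •
      (Finsupp.single (Option.some k) (1 : ℤ) -
        (Finsupp.single ((wheelNet n).tgt e) 1 : Option (Fin n) →₀ ℤ)))) ?_
  erw [Fintype.sum_sum_type]
  have hw : ∀ x : (Fin n × Bool) ⊕ (Fin n × Bool), (wheelNet n).w x = 1 := fun _ => rfl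
  simp only [hw, Fintype.sum_prod_type, Fintype.sum_bool, src_inl_t, src_inl_f, src_inr_t,
    src_inr_f, w_eq, one_smul, tgt_inl_t, tgt_inl_f, tgt_inr_t, tgt_inr_f,
    someinjV, noneneV, if_false, Finset.sum_const_zero, zero_add]
  rw [Finset.sum_add_distrib]
  simp only [← eq_sub_iff_add_eq]
  rw [Finset.sum_ite_eq' Finset.univ k
      (fun _ => Finsupp.single (Option.some k) (1:ℤ) - Finsupp.single none 1),
    Finset.sum_ite_eq' Finset.univ k
      (fun j => Finsupp.single (Option.some k) (1:ℤ) - Finsupp.single (Option.some (j+1)) 1),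
    Finset.sum_ite_eq' Finset.univ (k - 1)
      (fun j => Finsupp.single (Option.some k) (1:ℤ) - Finsupp.single (Option.some j) 1)]
  simp only [Finset.mem_univ, if_true]
  abel!

instance : Fintype (wheelNet n).V := inferInstanceAs (Fintype (Option (Fin n)))

lemma chainLap_single (x : (wheelNet n).V) :
    (wheelNet n).chainLap (Finsupp.single x 1) = (wheelNet n).lapSingle x := by
  unfold DNetwork.chainLap
  rw [Finsupp.lsum_single, LinearMap.toSpanSingleton_apply_one]

lemma chainLap_apply (c : (wheelNet n).V →₀ ℤ) :
    (wheelNet n).chainLap c = c.sum fun x cx => cx • (wheelNet n).lapSingle x := by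
  unfold DNetwork.chainLap
  rw [Finsupp.lsum_apply]
  rfl

lemma lapImage_eq :
    (wheelNet n).lapImage = LinearMap.range (wheelNet n).chainLap := by
  unfold DNetwork.lapImage DNetwork.interior
  have h : (wheelNet n).boundaryᶜ = (Set.univ : Set (wheelNet n).V) := Set.compl_empty
  rw [h, Finsupp.supported_univ, Submodule.map_top]

lemma lapSingle_mem (x : (wheelNet n).V) :
    (wheelNet n).lapSingle x ∈ (wheelNet n).lapImage := by
  rw [lapImage_eq]; exact ⟨Finsupp.single x 1, chainLap_single n x⟩

lemma eps_single (v : (wheelNet n).V) (c : ℤ) :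
    epsMap (wheelNet n) (Finsupp.single v c) = c := by
  unfold epsMap
  rw [Finsupp.lsum_single]
  rfl

lemma eps_apply (c : (wheelNet n).V →₀ ℤ) :
    epsMap (wheelNet n) c = ∑ v : (wheelNet n).V, c v := by
  unfold epsMap
  rw [Finsupp.lsum_apply]
  exact Finsupp.sum_fintype _ _ (fun _ => rfl)

lemma ker_eps : LinearMap.ker (epsMap (wheelNet n)) =
    Submodule.span ℤ (Set.range fun k : Fin n =>
      (Finsupp.single (Option.some k) 1 - Finsupp.single none 1 : (wheelNet n).V →₀ ℤ)) := by
  apply le_antisymm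
  · intro c hc
    rw [LinearMap.mem_ker, eps_apply] at hc
    have hc2 : c none + ∑ j : Fin n, c (Option.some j) = 0 :=
      Eq.trans (Fintype.sum_option fun v => c v).symm hc
    have hrepr : c = ∑ j : Fin n, c (Option.some j) •
        (Finsupp.single (Option.some j) 1 - Finsupp.single none 1 :
          (wheelNet n).V →₀ ℤ) := by
      ext v
      rw [Finset.sum_apply']
      cases v with
      | none =>
        have hv : ∀ j : Fin n, (c (Option.some j) •
            (Finsupp.single (Option.some j) 1 - Finsupp.single none 1 :
              (wheelNet n).V →₀ ℤ)) none = - c (Option.some j) := by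
          intro j
          have h1 : @Ne ((wheelNet n).V) (Option.some j) none := fun h => by cases h
          erw [Finsupp.smul_apply, Finsupp.sub_apply,
            Finsupp.single_eq_of_ne h1.symm, Finsupp.single_eq_same]
          simp
        rw [Finset.sum_congr rfl (fun j _ => hv j), Finset.sum_neg_distrib]
        omega
      | some v =>
        have hv : ∀ j : Fin n, (c (Option.some j) •
            (Finsupp.single (Option.some j) 1 - Finsupp.single none 1 :
              (wheelNet n).V →₀ ℤ)) (Option.some v) =
            if j = v then c (Option.some j) else 0 := by
          intro j
          classical
          have h1 : @Ne ((wheelNet n).V) none (Option.some v) := fun h => by cases h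
          erw [Finsupp.smul_apply, Finsupp.sub_apply,
            Finsupp.single_eq_of_ne h1.symm, Finsupp.single_apply]
          by_cases h : j = v
          · simp [h]
          · rw [if_neg (by simpa using h), if_neg h]; simp
        rw [Finset.sum_congr rfl (fun j _ => hv j),
          Finset.sum_ite_eq' Finset.univ v (fun j => c (Option.some j))]
        simp
    rw [hrepr]
    exact Submodule.sum_mem _ fun j _ =>
      Submodule.smul_mem _ _ (Submodule.subset_span ⟨j, rfl⟩)
  · rw [Submodule.span_le]
    rintro _ ⟨k, rfl⟩
    erw [SetLike.mem_coe, LinearMap.mem_ker, map_sub, eps_single, eps_single, sub_self]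

def aa : ℕ → ℤ
  | 0 => 1
  | 1 => 0
  | (k+2) => 3 * aa (k+1) - aa k

def bb : ℕ → ℤ
  | 0 => 0
  | 1 => 1
  | (k+2) => 3 * bb (k+1) - bb k

lemma fz_rec2 (k : ℕ) : fz (2*k + 4) = 3 * fz (2*k + 2) - fz (2*k) := by
  have h1 : fz (2*k + 4) = fz (2*k + 3) + fz (2*k + 2) := fz_add_two (2*k+2)
  have h2 : fz (2*k + 3) = fz (2*k + 2) + fz (2*k + 1) := fz_add_two (2*k+1)
  have h3 : fz (2*k + 2) = fz (2*k + 1) + fz (2*k) := fz_add_two (2*k)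
  linear_combination h1 + h2 - h3

lemma bb_fz : ∀ k, bb k = fz (2*k) := by
  intro k
  induction k using Nat.strong_induction_on with
  | _ k ih =>
    match k with
    | 0 => rfl
    | 1 => rfl
    | (k+2) =>
      have e1 : bb (k+2) = 3 * bb (k+1) - bb k := rfl
      rw [e1, ih (k+1) (by omega), ih k (by omega),
        (by ring : 2*(k+2) = 2*k + 4), (by ring : 2*(k+1) = 2*k + 2), fz_rec2]

lemma aa_bb : ∀ k, aa (k+1) = - bb k := by
  intro k
  induction k using Nat.strong_induction_on with
  | _ k ih =>
    match k with
    | 0 => rfl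
    | 1 => rfl
    | (k+2) =>
      have e1 : aa (k+3) = 3 * aa (k+2) - aa (k+1) := rfl
      have e2 : bb (k+2) = 3 * bb (k+1) - bb k := rfl
      rw [e1, e2, ih (k+1) (by omega), ih k (by omega)]
      ring

def ww (k : ℕ) : ℤ × ℤ := (aa k, bb k)

lemma ww_rec (k : ℕ) : ww (k+2) = (3:ℤ) • ww (k+1) - ww k := by
  have ha : aa (k+2) = 3 * aa (k+1) - aa k := rfl
  have hb : bb (k+2) = 3 * bb (k+1) - bb k := rfl
  unfold ww
  rw [Prod.ext_iff]
  constructor <;> simp [ha, hb]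

lemma ww_zero : ww 0 = (1, 0) := rfl
lemma ww_one : ww 1 = (0, 1) := rfl

lemma ww_sum : ∀ N : ℕ, ∑ j ∈ Finset.range (N+1), ww j
    = ww (N+1) - ww N + (2:ℤ) • ww 0 - ww 1 := by
  intro N
  induction N with
  | zero =>
    rw [Finset.sum_range_one]
    module
  | succ N ih =>
    rw [Finset.sum_range_succ, ih]
    show _ = ww (N + 2) - ww (N + 1) + (2:ℤ) • ww 0 - ww 1
    rw [ww_rec N]
    module

section Main
variable (m : ℕ)

noncomputable def wv : (wheelNet (m+2)).V → ℤ × ℤ := fun v =>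
  match v with
  | Option.none => 0
  | Option.some k => ww k.val

@[simp] lemma wv_none : wv m none = 0 := rfl
@[simp] lemma wv_some (k : Fin (m+2)) : wv m (Option.some k) = ww k.val := rfl

noncomputable def Phi : ((wheelNet (m+2)).V →₀ ℤ) →ₗ[ℤ] ℤ × ℤ :=
  Finsupp.lsum ℤ fun v => LinearMap.toSpanSingleton ℤ (ℤ × ℤ) (wv m v)

lemma Phi_single (v : (wheelNet (m+2)).V) (c : ℤ) :
    Phi m (Finsupp.single v c) = c • wv m v := by
  unfold Phi; rw [Finsupp.lsum_single, LinearMap.toSpanSingleton_apply]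

lemma Phi_single' (v : Option (Fin (m+2))) (c : ℤ) :
    Phi m (Finsupp.single v c : Option (Fin (m+2)) →₀ ℤ) = c • wv m v :=
  Phi_single m v c

def Lam : Submodule ℤ (ℤ × ℤ) :=
  Submodule.span ℤ {ww (m+2) - ww 0, ww (m+3) - ww 1}

lemma g1_mem : ww (m+2) - ww 0 ∈ Lam m :=
  Submodule.subset_span (Set.mem_insert _ _)
lemma g2_mem : ww (m+3) - ww 1 ∈ Lam m :=
  Submodule.subset_span (Set.mem_insert_of_mem _ rfl)

lemma phi_lapSingle_none : Phi m ((wheelNet (m+2)).lapSingle none) ∈ Lam m := by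
  rw [lapSingle_none, map_sum]
  have h1 : ∀ j : Fin (m+2),
      Phi m ((Finsupp.single (none : Option (Fin (m+2))) (1:ℤ) :
          (wheelNet (m+2)).V →₀ ℤ) -
          (Finsupp.single (Option.some j) 1 : (wheelNet (m+2)).V →₀ ℤ)) = - ww (j.val) := by
    intro j
    erw [map_sub, Phi_single, Phi_single, wv_none, wv_some]
    simp
  erw [Finset.sum_congr rfl fun j _ => h1 j, Finset.sum_neg_distrib,
    Fin.sum_univ_eq_sum_range (fun j => ww j)]
  have t : ∑ j ∈ Finset.range (m+2), ww j
      = ww (m+2) - ww (m+1) + (2:ℤ) • ww 0 - ww 1 := ww_sum (m+1)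
  have hr : ww (m+3) = (3:ℤ) • ww (m+2) - ww (m+1) := ww_rec (m+1)
  have key : -(∑ j ∈ Finset.range (m+2), ww j)
      = (2:ℤ) • (ww (m+2) - ww 0) - (ww (m+3) - ww 1) := by
    rw [t, hr]; module
  rw [key]
  exact sub_mem (Submodule.smul_mem _ _ (g1_mem m)) (g2_mem m)

lemma phi_lapSingle_some (k : Fin (m+2)) :
    Phi m ((wheelNet (m+2)).lapSingle (Option.some k)) ∈ Lam m := by
  rw [lapSingle_some]
  erw [map_add, map_add, map_sub, map_sub, map_sub]
  simp only [map_add, map_sub, Phi_single, Phi_single', wv_none, wv_some, one_smul, smul_zero]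
  rcases eq_or_ne k 0 with h0 | h0
  · rw [h0]
    have hp : ((0:Fin (m+2)) + 1).val = 1 := by
      rw [zero_add]; exact Fin.val_one _
    have hm : ((0:Fin (m+2)) - 1).val = m+1 := by
      rw [Fin.coe_sub_one, if_pos rfl]
    rw [hp, hm, (show ((0:Fin (m+2)).val) = 0 from rfl)]
    have hr : ww (m+3) = (3:ℤ) • ww (m+2) - ww (m+1) := ww_rec (m+1)
    have key : (ww 0 - 0) + (ww 0 - ww 1) + (ww 0 - ww (m+1))
        = (-3:ℤ) • (ww (m+2) - ww 0) + (ww (m+3) - ww 1) := by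
      rw [hr]; module
    rw [key]
    exact add_mem (Submodule.smul_mem _ _ (g1_mem m)) (g2_mem m)
  · rcases eq_or_ne k (Fin.last (m+1)) with hl | hl
    · rw [hl]
      have hp : (Fin.last (m+1) + 1).val = 0 := by
        rw [Fin.last_add_one]; rfl
      have hm : (Fin.last (m+1) - 1).val = m := by
        rw [Fin.coe_sub_one, if_neg (by simp [Fin.ext_iff]), Fin.val_last]
        omega
      rw [hp, hm, Fin.val_last]
      have hr : ww (m+2) = (3:ℤ) • ww (m+1) - ww m := ww_rec m
      have key : (ww (m+1) - 0) + (ww (m+1) - ww 0) + (ww (m+1) - ww m)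
          = ww (m+2) - ww 0 := by
        rw [hr]; module
      rw [key]
      exact g1_mem m
    · have hv0 : k.val ≠ 0 := by
        intro h; exact h0 (Fin.ext h)
      obtain ⟨j, hj⟩ : ∃ j, k.val = j + 1 := ⟨k.val - 1, by omega⟩
      have hp : (k + 1).val = j + 2 := by
        rw [Fin.val_add_one, if_neg hl, hj]
      have hm : (k - 1).val = j := by
        rw [Fin.coe_sub_one, if_neg h0, hj]
        omega
      rw [hp, hm, hj]
      have key : (ww (j+1) - 0) + (ww (j+1) - ww (j+2)) + (ww (j+1) - ww j)
          = 0 := by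
        rw [ww_rec j]; module
      rw [key]
      exact zero_mem _

lemma phi_lapSingle_mem (x : (wheelNet (m+2)).V) :
    Phi m ((wheelNet (m+2)).lapSingle x) ∈ Lam m := by
  match x with
  | Option.none => exact phi_lapSingle_none m
  | Option.some k => exact phi_lapSingle_some m k

lemma lapImage_le_ker :
    (wheelNet (m+2)).lapImage ≤ LinearMap.ker ((Lam m).mkQ ∘ₗ Phi m) := by
  rw [lapImage_eq]
  rintro x hx
  obtain ⟨c, rfl⟩ := hx
  rw [LinearMap.mem_ker, LinearMap.comp_apply, Submodule.mkQ_apply,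
    Submodule.Quotient.mk_eq_zero, chainLap_apply, map_finsuppSum]
  refine Submodule.sum_mem _ (fun v _ => ?_)
  show Phi m (c v • (wheelNet (m+2)).lapSingle v) ∈ Lam m
  rw [map_smul]
  exact Submodule.smul_mem _ _ (phi_lapSingle_mem m v)

noncomputable def PhiBar : (wheelNet (m+2)).Upsilon →ₗ[ℤ] ((ℤ × ℤ) ⧸ Lam m) :=
  Submodule.liftQ _ ((Lam m).mkQ ∘ₗ Phi m) (lapImage_le_ker m)

lemma PhiBar_mk (c : (wheelNet (m+2)).V →₀ ℤ) :
    PhiBar m (Submodule.Quotient.mk c) = Submodule.Quotient.mk (Phi m c) := rfl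

noncomputable def yy (k : Fin (m+2)) : (wheelNet (m+2)).Upsilon :=
  Submodule.Quotient.mk
    ((Finsupp.single (Option.some k) 1
      - Finsupp.single none 1 : (wheelNet (m+2)).V →₀ ℤ))

lemma rel (k : Fin (m+2)) : yy m (k+1) = (3:ℤ) • yy m k - yy m (k-1) := by
  have hc : (3:ℤ) • ((Finsupp.single (Option.some k) 1
        - Finsupp.single none 1 : (wheelNet (m+2)).V →₀ ℤ))
      - ((Finsupp.single (Option.some (k+1)) 1
        - Finsupp.single none 1 : (wheelNet (m+2)).V →₀ ℤ))
      - ((Finsupp.single (Option.some (k-1)) 1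
        - Finsupp.single none 1 : (wheelNet (m+2)).V →₀ ℤ))
      = (wheelNet (m+2)).lapSingle (Option.some k) := by
    rw [lapSingle_some]; abel!
  have h0 : (3:ℤ) • yy m k - yy m (k+1) - yy m (k-1) = 0 := by
    unfold yy
    rw [← Submodule.Quotient.mk_smul, ← Submodule.Quotient.mk_sub,
      ← Submodule.Quotient.mk_sub, hc, Submodule.Quotient.mk_eq_zero]
    exact lapSingle_mem _ _
  rw [← sub_eq_zero]
  have e : yy m (k+1) - ((3:ℤ) • yy m k - yy m (k-1))
      = -((3:ℤ) • yy m k - yy m (k+1) - yy m (k-1)) := by module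
  rw [e, h0, neg_zero]

lemma fin_mk_add_one (j : ℕ) (h : j + 1 < m + 2) :
    (⟨j, by omega⟩ : Fin (m+2)) + 1 = ⟨j+1, h⟩ := by
  apply Fin.ext
  rw [Fin.val_add_one, if_neg (by simp [Fin.ext_iff]; omega)]

lemma gen : ∀ j (hj : j < m + 2), yy m ⟨j, hj⟩ = aa j • yy m 0 + bb j • yy m 1 := by
  intro j
  induction j using Nat.strong_induction_on with
  | _ j ih =>
    cases j with
    | zero =>
      intro hj
      show yy m 0 = (1:ℤ) • yy m 0 + (0:ℤ) • yy m 1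
      rw [one_smul, zero_smul, add_zero]
    | succ j' =>
      cases j' with
      | zero =>
        intro hj
        have h11 : (⟨1, hj⟩ : Fin (m+2)) = 1 := by
          apply Fin.ext; rw [Fin.val_one]
        rw [h11]
        show yy m 1 = (0:ℤ) • yy m 0 + (1:ℤ) • yy m 1
        rw [one_smul, zero_smul, zero_add]
      | succ j =>
        intro hj
        have hj1 : j + 1 < m + 2 := by omega
        have hA : (⟨j+1, hj1⟩ : Fin (m+2)) + 1 = ⟨j+2, hj⟩ := fin_mk_add_one m (j+1) hj
        have hB : (⟨j+1, hj1⟩ : Fin (m+2)) - 1 = ⟨j, by omega⟩ := by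
          rw [sub_eq_iff_eq_add]
          exact (fin_mk_add_one m j hj1).symm
        have hr := rel m ⟨j+1, hj1⟩
        rw [hA, hB] at hr
        rw [hr, ih (j+1) (by omega) hj1, ih j (by omega) (by omega)]
        have ea : aa (j+2) = 3 * aa (j+1) - aa j := rfl
        have eb : bb (j+2) = 3 * bb (j+1) - bb j := rfl
        rw [ea, eb]
        module

lemma relA : aa (m+2) • yy m 0 + bb (m+2) • yy m 1 = yy m 0 := by
  have hr := rel m (Fin.last (m+1))
  have h1 : Fin.last (m+1) + 1 = 0 := Fin.last_add_one (m+1)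
  have h2 : Fin.last (m+1) - 1 = (⟨m, by omega⟩ : Fin (m+2)) := by
    rw [sub_eq_iff_eq_add]
    apply Fin.ext
    rw [Fin.val_add_one, if_neg (by simp [Fin.ext_iff])]
    simp [Fin.val_last]
  have h3 : Fin.last (m+1) = (⟨m+1, by omega⟩ : Fin (m+2)) := rfl
  rw [h1, h2, h3] at hr
  rw [gen m (m+1) (by omega), gen m m (by omega)] at hr
  have ea : aa (m+2) = 3 * aa (m+1) - aa m := rfl
  have eb : bb (m+2) = 3 * bb (m+1) - bb m := rfl
  calc aa (m+2) • yy m 0 + bb (m+2) • yy m 1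
      = (3:ℤ) • (aa (m+1) • yy m 0 + bb (m+1) • yy m 1)
        - (aa m • yy m 0 + bb m • yy m 1) := by rw [ea, eb]; module
    _ = yy m 0 := hr.symm

lemma relB : aa (m+3) • yy m 0 + bb (m+3) • yy m 1 = yy m 1 := by
  have hr := rel m 0
  have h1 : (0 : Fin (m+2)) + 1 = 1 := zero_add 1
  have h2 : (0 : Fin (m+2)) - 1 = (⟨m+1, by omega⟩ : Fin (m+2)) := by
    apply Fin.ext
    rw [Fin.coe_sub_one, if_pos rfl]
  rw [h1, h2, gen m (m+1) (by omega)] at hr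
  have ea : aa (m+3) = 3 * aa (m+2) - aa (m+1) := rfl
  have eb : bb (m+3) = 3 * bb (m+2) - bb (m+1) := rfl
  calc aa (m+3) • yy m 0 + bb (m+3) • yy m 1
      = (3:ℤ) • (aa (m+2) • yy m 0 + bb (m+2) • yy m 1)
        - (aa (m+1) • yy m 0 + bb (m+1) • yy m 1) := by rw [ea, eb]; module
    _ = (3:ℤ) • yy m 0 - (aa (m+1) • yy m 0 + bb (m+1) • yy m 1) := by rw [relA m]
    _ = yy m 1 := hr.symm

noncomputable def Gam : (ℤ × ℤ) →ₗ[ℤ] (wheelNet (m+2)).Upsilon :=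
  (LinearMap.toSpanSingleton ℤ _ (yy m 0)).comp (LinearMap.fst ℤ ℤ ℤ)
    + (LinearMap.toSpanSingleton ℤ _ (yy m 1)).comp (LinearMap.snd ℤ ℤ ℤ)

lemma Gam_apply (a b : ℤ) : Gam m (a, b) = a • yy m 0 + b • yy m 1 := by
  simp [Gam, LinearMap.toSpanSingleton_apply]

lemma Gam_ww (k : ℕ) : Gam m (ww k) = aa k • yy m 0 + bb k • yy m 1 :=
  Gam_apply m (aa k) (bb k)

lemma Lam_le_kerGam : Lam m ≤ LinearMap.ker (Gam m) := by
  rw [Lam, Submodule.span_le]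
  intro x hx
  rcases hx with rfl | hx
  · rw [SetLike.mem_coe, LinearMap.mem_ker, map_sub, Gam_ww, Gam_ww, relA]
    show yy m 0 - ((1:ℤ) • yy m 0 + (0:ℤ) • yy m 1) = 0
    rw [one_smul, zero_smul, add_zero, sub_self]
  · rw [Set.mem_singleton_iff] at hx
    subst hx
    rw [SetLike.mem_coe, LinearMap.mem_ker, map_sub, Gam_ww, Gam_ww, relB]
    show yy m 1 - ((0:ℤ) • yy m 0 + (1:ℤ) • yy m 1) = 0
    rw [one_smul, zero_smul, zero_add, sub_self]

noncomputable def GamBar : ((ℤ × ℤ) ⧸ Lam m) →ₗ[ℤ] (wheelNet (m+2)).Upsilon :=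
  Submodule.liftQ _ (Gam m) (Lam_le_kerGam m)

lemma leftInv : ∀ q, PhiBar m (GamBar m q) = q := by
  intro q
  obtain ⟨z, rfl⟩ := Submodule.Quotient.mk_surjective _ q
  obtain ⟨a, b⟩ := z
  rw [GamBar, Submodule.liftQ_apply, Gam_apply]
  unfold yy
  rw [← Submodule.Quotient.mk_smul, ← Submodule.Quotient.mk_smul,
    ← Submodule.Quotient.mk_add, PhiBar_mk]
  congr 1
  have h0 : Phi m ((Finsupp.single (Option.some (0 : Fin (m+2))) 1
      - Finsupp.single none 1 : (wheelNet (m+2)).V →₀ ℤ)) = (1, 0) := by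
    erw [map_sub, Phi_single, Phi_single, wv_none, wv_some]
    show (1:ℤ) • ww (0 : Fin (m+2)).val - (1:ℤ) • 0 = (1, 0)
    rw [(show ((0 : Fin (m+2))).val = 0 from rfl), ww_zero]
    simp
  have h1 : Phi m ((Finsupp.single (Option.some (1 : Fin (m+2))) 1
      - Finsupp.single none 1 : (wheelNet (m+2)).V →₀ ℤ)) = (0, 1) := by
    erw [map_sub, Phi_single, Phi_single, wv_none, wv_some]
    show (1:ℤ) • ww (1 : Fin (m+2)).val - (1:ℤ) • 0 = (0, 1)
    rw [Fin.val_one, ww_one]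
    simp
  rw [map_add, map_smul, map_smul, h0, h1]
  simp [Prod.ext_iff]

lemma GamBar_inj : Function.Injective (GamBar m) :=
  Function.LeftInverse.injective (g := PhiBar m) (leftInv m)

lemma wheelCrit_eq (n : ℕ) [NeZero n] :
    wheelCrit n = Submodule.span ℤ (Set.range fun k : Fin n =>
      (Submodule.Quotient.mk
        ((Finsupp.single (Option.some k) 1
          - Finsupp.single none 1 : (wheelNet n).V →₀ ℤ)) : (wheelNet n).Upsilon)) := by
  unfold wheelCrit
  rw [ker_eps, Submodule.map_span, ← Set.range_comp]
  rfl

lemma yy_mem_crit (k : Fin (m+2)) : yy m k ∈ wheelCrit (m+2) := by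
  rw [wheelCrit_eq]
  exact Submodule.subset_span ⟨k, rfl⟩

lemma range_GamBar : LinearMap.range (GamBar m) = wheelCrit (m+2) := by
  rw [GamBar, Submodule.range_liftQ]
  apply le_antisymm
  · rintro x ⟨⟨a, b⟩, rfl⟩
    rw [Gam_apply]
    exact add_mem (Submodule.smul_mem _ _ (yy_mem_crit m 0))
      (Submodule.smul_mem _ _ (yy_mem_crit m 1))
  · rw [wheelCrit_eq, Submodule.span_le]
    rintro _ ⟨k, rfl⟩
    refine ⟨ww k.val, ?_⟩
    rw [Gam_ww, ← gen m k.val k.isLt]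
    exact congrArg (yy m) (Fin.eta k k.isLt)

noncomputable def critEquiv : ((ℤ × ℤ) ⧸ Lam m) ≃ₗ[ℤ] wheelCrit (m+2) :=
  (LinearEquiv.ofInjective (GamBar m) (GamBar_inj m)).trans
    (LinearEquiv.ofEq _ _ (range_GamBar m))

lemma aa_m2 : aa (m+2) = - fz (2*m+2) := by
  rw [aa_bb (m+1), bb_fz (m+1), (by ring : 2*(m+1) = 2*m+2)]
lemma bb_m2 : bb (m+2) = fz (2*m+4) := by
  rw [bb_fz (m+2), (by ring : 2*(m+2) = 2*m+4)]
lemma aa_m3 : aa (m+3) = - fz (2*m+4) := by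
  rw [aa_bb (m+2), bb_fz (m+2), (by ring : 2*(m+2) = 2*m+4)]
lemma bb_m3 : bb (m+3) = fz (2*m+6) := by
  rw [bb_fz (m+3), (by ring : 2*(m+3) = 2*m+6)]

lemma lucsum : luc (m+2) = luc (m+1) + luc m := by
  linear_combination lucx2 m - lucx1 m - lucx0 m
lemma luc4 : luc (m+4) = 3 * luc (m+1) + 2 * luc m := by
  linear_combination lucx4 m - 3 * lucx1 m - 2 * lucx0 m

lemma g_coords : ww (m+2) - ww 0 = (aa (m+2) - 1, bb (m+2)) ∧
    ww (m+3) - ww 1 = (aa (m+3), bb (m+3) - 1) := by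
  constructor
  · show ((aa (m+2), bb (m+2)) : ℤ × ℤ) - (aa 0, bb 0) = _
    rw [Prod.mk_sub_mk]
    simp only [show aa 0 = 1 from rfl, show bb 0 = 0 from rfl, sub_zero]
  · show ((aa (m+3), bb (m+3)) : ℤ × ℤ) - (aa 1, bb 1) = _
    rw [Prod.mk_sub_mk]
    simp only [show aa 1 = 0 from rfl, show bb 1 = 1 from rfl, sub_zero]

lemma gO1 (hm : Odd m) :
    ww (m+2) - ww 0 = (luc (m+2) * (-(fz m)), luc (m+2) * fz (m+2)) := by
  rw [(g_coords m).1, Prod.mk.injEq]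
  constructor
  · linear_combination aa_m2 m - I1o hm
  · linear_combination bb_m2 m + I2 m

lemma gO2 (hm : Odd m) :
    ww (m+3) - ww 1 = (luc (m+2) * (-(fz (m+2))), luc (m+2) * fz (m+4)) := by
  rw [(g_coords m).2, Prod.mk.injEq]
  constructor
  · linear_combination aa_m3 m - I2 m
  · linear_combination bb_m3 m + I3o hm

lemma gE1 (hm : Even m) :
    ww (m+2) - ww 0 = (fz (m+2) * (-(luc m)), fz (m+2) * luc (m+2)) := by
  rw [(g_coords m).1, Prod.mk.injEq]
  constructor
  · linear_combination aa_m2 m - I1e hm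
  · linear_combination bb_m2 m + I2 m
lemma gE2 (hm : Even m) :
    ww (m+3) - ww 1 = (fz (m+2) * (-(luc (m+2))), fz (m+2) * luc (m+4)) := by
  rw [(g_coords m).2, Prod.mk.injEq]
  constructor
  · linear_combination aa_m3 m - I2 m
  · linear_combination bb_m3 m + I3e hm

noncomputable def castL (M : ℕ) : ℤ →ₗ[ℤ] ZMod M :=
  (Int.castAddHom (ZMod M)).toIntLinearMap
lemma castL_apply (M : ℕ) (x : ℤ) : castL M x = (x : ZMod M) := rfl

noncomputable def psiO (N : ℕ) : (ℤ × ℤ) →ₗ[ℤ] ZMod N × ZMod N :=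
  ((castL N).comp (LinearMap.fst ℤ ℤ ℤ)).prod ((castL N).comp (LinearMap.snd ℤ ℤ ℤ))

lemma psiO_apply (N : ℕ) (z : ℤ × ℤ) :
    psiO N z = ((z.1 : ZMod N), (z.2 : ZMod N)) := rfl

lemma psiO_surj (N : ℕ) : Function.Surjective (psiO N) := by
  rintro ⟨u, v⟩
  obtain ⟨a, ha⟩ := ZMod.intCast_surjective (n := N) u
  obtain ⟨b, hb⟩ := ZMod.intCast_surjective (n := N) v
  exact ⟨(a, b), by rw [psiO_apply, ha, hb]⟩

lemma mem_ker_psiO (N : ℕ) (z : ℤ × ℤ) :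
    z ∈ LinearMap.ker (psiO N) ↔ (N:ℤ) ∣ z.1 ∧ (N:ℤ) ∣ z.2 := by
  rw [LinearMap.mem_ker, psiO_apply, Prod.ext_iff, Prod.fst_zero, Prod.snd_zero,
    ZMod.intCast_zmod_eq_zero_iff_dvd, ZMod.intCast_zmod_eq_zero_iff_dvd]

noncomputable def psiE (F N5 : ℕ) : (ℤ × ℤ) →ₗ[ℤ] ZMod F × ZMod N5 :=
  ((castL F).comp (LinearMap.fst ℤ ℤ ℤ)).prod
    ((castL N5).comp (LinearMap.snd ℤ ℤ ℤ - LinearMap.fst ℤ ℤ ℤ))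

lemma psiE_apply (F N5 : ℕ) (z : ℤ × ℤ) :
    psiE F N5 z = ((z.1 : ZMod F), ((z.2 - z.1 : ℤ) : ZMod N5)) := rfl

lemma psiE_surj (F N5 : ℕ) : Function.Surjective (psiE F N5) := by
  rintro ⟨u, v⟩
  obtain ⟨a, ha⟩ := ZMod.intCast_surjective (n := F) u
  obtain ⟨b, hb⟩ := ZMod.intCast_surjective (n := N5) v
  refine ⟨(a, a + b), ?_⟩
  rw [psiE_apply]
  simp [ha, hb]

lemma mem_ker_psiE (F N5 : ℕ) (z : ℤ × ℤ) :
    z ∈ LinearMap.ker (psiE F N5) ↔ (F:ℤ) ∣ z.1 ∧ (N5:ℤ) ∣ z.2 - z.1 := by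
  rw [LinearMap.mem_ker, psiE_apply, Prod.ext_iff, Prod.fst_zero, Prod.snd_zero,
    ZMod.intCast_zmod_eq_zero_iff_dvd, ZMod.intCast_zmod_eq_zero_iff_dvd]

lemma Ncast : ((Nat.fib (m+1) + Nat.fib (m+3) : ℕ) : ℤ) = luc (m+2) := by
  push_cast
  show fz (m+1) + fz (m+3) = luc (m+2)
  have h1 : fz (m+3) = fz (m+2) + fz (m+1) := fz_add_two (m+1)
  have h2 : luc (m+2) = 2 * fz (m+3) - fz (m+2) := rfl
  linear_combination -h1 - h2

lemma LamOdd (hm : Odd m) :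
    Lam m = LinearMap.ker (psiO (Nat.fib (m+1) + Nat.fib (m+3))) := by
  have hN := Ncast m
  apply le_antisymm
  · rw [Lam, Submodule.span_le]
    intro x hx
    rcases hx with rfl | hx
    · rw [SetLike.mem_coe, mem_ker_psiO, gO1 m hm, hN]
      exact ⟨⟨-(fz m), rfl⟩, ⟨fz (m+2), rfl⟩⟩
    · rw [Set.mem_singleton_iff] at hx
      subst hx
      rw [SetLike.mem_coe, mem_ker_psiO, gO2 m hm, hN]
      exact ⟨⟨-(fz (m+2)), rfl⟩, ⟨fz (m+4), rfl⟩⟩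
  · intro z hz
    rw [mem_ker_psiO, hN] at hz
    obtain ⟨⟨u, hu⟩, ⟨v, hv⟩⟩ := hz
    have hi := I4o hm
    have e1 : (luc (m+2) * u, luc (m+2) * v)
        = (-(fz (m+4)) * u - fz (m+2) * v) • (ww (m+2) - ww 0)
          + ((fz (m+2)) * u + fz m * v) • (ww (m+3) - ww 1) := by
      rw [gO1 m hm, gO2 m hm, Prod.smul_mk, Prod.smul_mk, Prod.mk_add_mk, Prod.mk.injEq]
      constructor
      · show luc (m+2) * u = (-(fz (m+4)) * u - fz (m+2) * v) * (luc (m+2) * (-(fz m)))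
          + ((fz (m+2)) * u + fz m * v) * (luc (m+2) * (-(fz (m+2))))
        linear_combination (luc (m+2) * u) * hi
      · show luc (m+2) * v = (-(fz (m+4)) * u - fz (m+2) * v) * (luc (m+2) * fz (m+2))
          + ((fz (m+2)) * u + fz m * v) * (luc (m+2) * fz (m+4))
        linear_combination (luc (m+2) * v) * hi
    have hz2 : z = (luc (m+2) * u, luc (m+2) * v) := by
      rw [Prod.ext_iff]
      exact ⟨hu, hv⟩
    rw [hz2, e1]
    exact add_mem (Submodule.smul_mem _ _ (g1_mem m)) (Submodule.smul_mem _ _ (g2_mem m))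

lemma LamEven (hm : Even m) :
    Lam m = LinearMap.ker (psiE (Nat.fib (m+2)) (5 * Nat.fib (m+2))) := by
  have hF : ((Nat.fib (m+2) : ℕ) : ℤ) = fz (m+2) := rfl
  have hN5 : ((5 * Nat.fib (m+2) : ℕ) : ℤ) = 5 * fz (m+2) := by push_cast; rfl
  have h5 := I5e hm
  obtain ⟨t, ht⟩ := I6e hm
  have hsum := lucsum m
  have h4 := luc4 m
  apply le_antisymm
  · rw [Lam, Submodule.span_le]
    intro x hx
    rcases hx with rfl | hx
    · rw [SetLike.mem_coe, mem_ker_psiE, gE1 m hm, hF, hN5]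
      refine ⟨⟨-(luc m), rfl⟩, ⟨luc (m+1) - 2*t, ?_⟩⟩
      show fz (m+2) * luc (m+2) - fz (m+2) * (-(luc m))
        = 5 * fz (m+2) * (luc (m+1) - 2*t)
      linear_combination fz (m+2) * hsum - 2 * fz (m+2) * ht
    · rw [Set.mem_singleton_iff] at hx
      subst hx
      rw [SetLike.mem_coe, mem_ker_psiE, gE2 m hm, hF, hN5]
      refine ⟨⟨-(luc (m+2)), rfl⟩, ⟨luc m + 2*t, ?_⟩⟩
      show fz (m+2) * luc (m+4) - fz (m+2) * (-(luc (m+2)))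
        = 5 * fz (m+2) * (luc m + 2*t)
      linear_combination fz (m+2) * h4 + fz (m+2) * hsum + 2 * fz (m+2) * ht
  · intro z hz
    rw [mem_ker_psiE, hF, hN5] at hz
    obtain ⟨⟨u, hu⟩, ⟨v, hv⟩⟩ := hz
    have key1 : (-(luc m + 2*t)) * (-(luc m)) + (luc (m+1) - 2*t) * (-(luc (m+2))) = 1 := by
      have h55 : (5:ℤ) * ((-(luc m + 2*t)) * (-(luc m))
          + (luc (m+1) - 2*t) * (-(luc (m+2)))) = 5 * 1 := by
        linear_combination (-2*luc (m+1) - 4*luc m) * ht - h5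
          - 5*(luc (m+1) - 2*t) * hsum
      exact mul_left_cancel₀ (by norm_num) h55
    have key2 : (-(luc m + 2*t)) * luc (m+2) + (luc (m+1) - 2*t) * luc (m+4) = 1 := by
      have h55 : (5:ℤ) * ((-(luc m + 2*t)) * luc (m+2)
          + (luc (m+1) - 2*t) * luc (m+4)) = 5 * 1 := by
        linear_combination (8*luc (m+1) + 6*luc m) * ht - h5
          - 5*(luc m + 2*t) * hsum + 5*(luc (m+1) - 2*t) * h4
      exact mul_left_cancel₀ (by norm_num) h55
    have mFF : ((fz (m+2), fz (m+2)) : ℤ × ℤ) ∈ Lam m := by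
      have eFF : ((fz (m+2), fz (m+2)) : ℤ × ℤ)
          = (-(luc m + 2*t)) • (ww (m+2) - ww 0)
            + (luc (m+1) - 2*t) • (ww (m+3) - ww 1) := by
        rw [gE1 m hm, gE2 m hm, Prod.smul_mk, Prod.smul_mk, Prod.mk_add_mk,
          Prod.mk.injEq]
        constructor
        · show fz (m+2) = (-(luc m + 2*t)) * (fz (m+2) * (-(luc m)))
            + (luc (m+1) - 2*t) * (fz (m+2) * (-(luc (m+2))))
          linear_combination -(fz (m+2)) * key1
        · show fz (m+2) = (-(luc m + 2*t)) * (fz (m+2) * luc (m+2))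
            + (luc (m+1) - 2*t) * (fz (m+2) * luc (m+4))
          linear_combination -(fz (m+2)) * key2
      rw [eFF]
      exact add_mem (Submodule.smul_mem _ _ (g1_mem m)) (Submodule.smul_mem _ _ (g2_mem m))
    have m05 : ((0, 5 * fz (m+2)) : ℤ × ℤ) ∈ Lam m := by
      have e05 : ((0, 5 * fz (m+2)) : ℤ × ℤ)
          = (-(luc (m+2))) • (ww (m+2) - ww 0) + luc m • (ww (m+3) - ww 1) := by
        rw [gE1 m hm, gE2 m hm, Prod.smul_mk, Prod.smul_mk, Prod.mk_add_mk,
          Prod.mk.injEq]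
        constructor
        · show (0:ℤ) = (-(luc (m+2))) * (fz (m+2) * (-(luc m)))
            + luc m * (fz (m+2) * (-(luc (m+2))))
          ring
        · show (5 : ℤ) * fz (m+2) = (-(luc (m+2))) * (fz (m+2) * luc (m+2))
            + luc m * (fz (m+2) * luc (m+4))
          linear_combination fz (m+2) * h5 - fz (m+2) * luc m * h4
            + fz (m+2) * (luc (m+2) + luc (m+1) + luc m) * hsum
      rw [e05]
      exact add_mem (Submodule.smul_mem _ _ (g1_mem m)) (Submodule.smul_mem _ _ (g2_mem m))
    have hz2 : z = u • ((fz (m+2), fz (m+2)) : ℤ × ℤ)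
        + v • ((0, 5 * fz (m+2)) : ℤ × ℤ) := by
      rw [Prod.smul_mk, Prod.smul_mk, Prod.mk_add_mk, Prod.ext_iff]
      constructor
      · show z.1 = u • fz (m+2) + v • (0:ℤ)
        rw [smul_eq_mul, smul_eq_mul]
        rw [hu]; ring
      · show z.2 = u • fz (m+2) + v • (5 * fz (m+2))
        rw [smul_eq_mul, smul_eq_mul]
        linear_combination hu + hv
    rw [hz2]
    exact add_mem (Submodule.smul_mem _ _ mFF) (Submodule.smul_mem _ _ m05)

noncomputable def oddEquiv (hm : Odd m) :
    ((ℤ × ℤ) ⧸ Lam m) ≃ₗ[ℤ]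
      ZMod (Nat.fib (m+1) + Nat.fib (m+3)) × ZMod (Nat.fib (m+1) + Nat.fib (m+3)) :=
  (Submodule.quotEquivOfEq _ _ (LamOdd m hm)).trans
    ((psiO _).quotKerEquivOfSurjective (psiO_surj _))

noncomputable def evenEquiv (hm : Even m) :
    ((ℤ × ℤ) ⧸ Lam m) ≃ₗ[ℤ]
      ZMod (Nat.fib (m+2)) × ZMod (5 * Nat.fib (m+2)) :=
  (Submodule.quotEquivOfEq _ _ (LamEven m hm)).trans
    ((psiE _ _).quotKerEquivOfSurjective (psiE_surj _ _))

lemma crit_one : wheelCrit 1 = ⊥ := by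
  rw [wheelCrit_eq 1, Submodule.span_eq_bot]
  rintro _ ⟨k, rfl⟩
  rw [Submodule.Quotient.mk_eq_zero]
  have hk : k = 0 := Subsingleton.elim k 0
  subst hk
  have h : (Finsupp.single (Option.some (0 : Fin 1)) 1
      - Finsupp.single none 1 : (wheelNet 1).V →₀ ℤ)
      = -((wheelNet 1).lapSingle none) := by
    rw [lapSingle_none, Fin.sum_univ_one]
    abel!
  rw [h]
  exact neg_mem (lapSingle_mem _ _)

lemma crit_one_subsingleton : Subsingleton ↥(wheelCrit 1) := by
  rw [crit_one]
  exact ⟨fun a b => Subtype.ext (by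
    rw [(Submodule.mem_bot ℤ).mp a.2, (Submodule.mem_bot ℤ).mp b.2])⟩

end Main
end WheelAux

/-- for odd `n`, `Crit(W_n) ≅ ℤ/(F_{n-1}+F_{n+1}) × ℤ/(F_{n-1}+F_{n+1})`, and
for even `n`, `Crit(W_n) ≅ ℤ/F_n × ℤ/(5 F_n)`. -/
theorem crit_wheel (n : ℕ) [NeZero n] :
    (Odd n → Nonempty (↥(wheelCrit n) ≃ₗ[ℤ]
        (ZMod (Nat.fib (n - 1) + Nat.fib (n + 1)) ×
          ZMod (Nat.fib (n - 1) + Nat.fib (n + 1))))) ∧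
      (Even n → Nonempty (↥(wheelCrit n) ≃ₗ[ℤ]
        (ZMod (Nat.fib n) × ZMod (5 * Nat.fib n)))) := by
  constructor
  · intro hodd
    by_cases h1 : n = 1
    · subst h1
      haveI hs : Subsingleton ↥(wheelCrit 1) := WheelAux.crit_one_subsingleton
      haveI hz : Subsingleton (ZMod (Nat.fib (1 - 1) + Nat.fib (1 + 1)) ×
          ZMod (Nat.fib (1 - 1) + Nat.fib (1 + 1))) := by
        rw [show Nat.fib (1 - 1) + Nat.fib (1 + 1) = 1 by norm_num]
        infer_instance
      exact ⟨LinearEquiv.ofSubsingleton _ _⟩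
    · obtain ⟨m, rfl⟩ : ∃ m, n = m + 2 := by
        rcases hodd with ⟨j, hj⟩
        exact ⟨n - 2, by omega⟩
      have hm : Odd m := by
        rcases hodd with ⟨j, hj⟩
        exact ⟨j - 1, by omega⟩
      exact ⟨(WheelAux.critEquiv m).symm.trans (WheelAux.oddEquiv m hm)⟩
  · intro heven
    obtain ⟨m, rfl⟩ : ∃ m, n = m + 2 := by
      rcases heven with ⟨j, hj⟩
      have := NeZero.ne n
      exact ⟨n - 2, by omega⟩
    have hm : Even m := by
      rcases heven with ⟨j, hj⟩
      exact ⟨j - 1, by omega⟩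
    exact ⟨(WheelAux.critEquiv m).symm.trans (WheelAux.evenEquiv m hm)⟩
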